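/- Let (ℱ, 𝒮) be a digraph-source sequence of size ℓ and let ℬ be a family of subsets of ⋃_i V(G_i). Then the maximum size of a set of T-paths with respect to (ℱ, 𝒮) and ℬ equals the minimum order of a T-cut, i.e., equals min over ℬ′ ⊆ ℬ of (|ℬ \ ℬ′| + f^D(ℱ, 𝒮, ⋃ℬ′)), where f^D(ℱ, 𝒮, B) is the minimum order of a D-cut with respect to (ℱ, 𝒮) and B. -/

import Mathlib

/-- A (directed) path given as a nonempty list of pairwise-distinct vertices
with consecutive pairs being edges of the digraph `G`. -/
def IsPathList {V : Type*} (G : V → V → Prop) (p : List V) : Prop :=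
  p ≠ [] ∧ p.Nodup ∧ p.Chain' G

/-- The first vertex of the list `p` belongs to `A`. -/
def FirstIn {V : Type*} (p : List V) (A : Set V) : Prop := ∃ a ∈ A, p.head? = some a

/-- The last vertex of the list `p` belongs to `A`. -/
def LastIn {V : Type*} (p : List V) (A : Set V) : Prop := ∃ a ∈ A, p.getLast? = some a

/-- `X` is an `(A,B)`-separator in `G`: every path of `G` starting in `A` and
ending in `B` meets `X`. -/
def IsSeparator {V : Type*} (G : V → V → Prop) (A B X : Set V) : Prop :=
  ∀ p : List V, IsPathList G p → FirstIn p A → LastIn p B → ∃ v ∈ p, v ∈ X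

/-- Two lists of vertices share no vertex. -/
def ListsDisjoint {V : Type*} (p q : List V) : Prop := ∀ v, v ∈ p → v ∉ q

/-- An `(ℱ,𝒮)`-respecting system of paths, encoded as a finite set of pairs
`(i, p)` where `p` is a path of `G i` starting in `S i`, and paths assigned to
the same index (i.e. in the same part of the defining partition) are pairwise
vertex-disjoint. -/
def RespectingSys {V : Type*} {ℓ : ℕ} (G : Fin ℓ → V → V → Prop) (S : Fin ℓ → Set V)
    (P : Finset (Fin ℓ × List V)) : Prop :=
  (∀ q ∈ P, IsPathList (G q.1) q.2 ∧ FirstIn q.2 (S q.1)) ∧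
  (∀ q ∈ P, ∀ q' ∈ P, q ≠ q' → q.1 = q'.1 → ListsDisjoint q.2 q'.2)

/-- A set of D-paths w.r.t. `(ℱ,𝒮)` and `B` : a respecting system whose paths
have pairwise distinct last vertices, all lying in `B`. -/
def DPathSys {V : Type*} {ℓ : ℕ} (G : Fin ℓ → V → V → Prop) (S : Fin ℓ → Set V)
    (B : Set V) (P : Finset (Fin ℓ × List V)) : Prop :=
  RespectingSys G S P ∧ (∀ q ∈ P, LastIn q.2 B) ∧
  (∀ q ∈ P, ∀ q' ∈ P, q ≠ q' → q.2.getLast? ≠ q'.2.getLast?)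

/-- A set of T-paths w.r.t. `(ℱ,𝒮)` and the family `ℬ` : a respecting system
with pairwise distinct last vertices forming a partial transversal of `ℬ`
(witnessed by an injective assignment of bags). -/
def TPathSys {V : Type*} {ℓ : ℕ} (G : Fin ℓ → V → V → Prop) (S : Fin ℓ → Set V)
    (ℬ : Finset (Finset V)) (P : Finset (Fin ℓ × List V)) : Prop :=
  RespectingSys G S P ∧
  (∀ q ∈ P, ∀ q' ∈ P, q ≠ q' → q.2.getLast? ≠ q'.2.getLast?) ∧
  ∃ φ : Fin ℓ × List V → Finset V, Set.InjOn φ ↑P ∧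
    ∀ q ∈ P, φ q ∈ ℬ ∧ ∃ v, q.2.getLast? = some v ∧ v ∈ φ q

open List

section Toolkit
variable {W : Type*}

lemma isPathList_mono {R R' : W → W → Prop} (h : ∀ a b, R a b → R' a b) {p : List W}
    (hp : IsPathList R p) : IsPathList R' p :=
  ⟨hp.1, hp.2.1, hp.2.2.imp h⟩

lemma mem_of_getLast?_eq {p : List W} {v : W} (h : p.getLast? = some v) : v ∈ p := by
  cases p with
  | nil => simp at h
  | cons a l =>
    have := List.getLast?_eq_getLast (l := a :: l) (by simp)
    rw [this] at h
    exact (Option.some_inj.1 h) ▸ List.getLast_mem _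

lemma mem_of_head?_eq {p : List W} {v : W} (h : p.head? = some v) : v ∈ p := by
  cases p with
  | nil => simp at h
  | cons a l => simp at h; simp [h]

lemma exists_first_mem {p : List W} {X : Set W} (h : ∃ v ∈ p, v ∈ X) :
    ∃ p₁ w p₂, p = p₁ ++ w :: p₂ ∧ w ∈ X ∧ ∀ u ∈ p₁, u ∉ X := by
  induction p with
  | nil => simp at h
  | cons a l ih =>
    by_cases ha : a ∈ X
    · exact ⟨[], a, l, rfl, ha, by simp⟩
    · obtain ⟨v, hv, hvX⟩ := h
      rcases List.mem_cons.1 hv with rfl | hv'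
      · exact absurd hvX ha
      · obtain ⟨p₁, w, p₂, rfl, hw, hp₁⟩ := ih ⟨v, hv', hvX⟩
        exact ⟨a :: p₁, w, p₂, rfl, hw, by
          intro u hu; rcases List.mem_cons.1 hu with rfl | hu'
          · exact ha
          · exact hp₁ u hu'⟩

lemma not_nodup_split {p : List W} (h : ¬ p.Nodup) :
    ∃ p₁ x p₂, p = p₁ ++ x :: p₂ ∧ x ∈ p₂ := by
  induction p with
  | nil => simp at h
  | cons a l ih =>
    by_cases ha : a ∈ l
    · exact ⟨[], a, l, rfl, ha⟩
    · have : ¬ l.Nodup := fun hl => h (List.nodup_cons.2 ⟨ha, hl⟩)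
      obtain ⟨p₁, x, p₂, rfl, hx⟩ := ih this
      exact ⟨a :: p₁, x, p₂, rfl, hx⟩

lemma walk_to_path_aux {R : W → W → Prop} :
    ∀ (n : ℕ) (p : List W), p.length ≤ n → p ≠ [] → p.Chain' R →
    ∃ q : List W, q ≠ [] ∧ q.Nodup ∧ q.Chain' R ∧ q.head? = p.head? ∧
      q.getLast? = p.getLast? ∧ ∀ v ∈ q, v ∈ p := by
  intro n
  induction n with
  | zero => intro p hl hne; simp [List.length_eq_zero_iff] at hl; exact absurd hl hne
  | succ n ih =>
  intro p hn hne hc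
  by_cases hnd : p.Nodup
  · exact ⟨p, hne, hnd, hc, rfl, rfl, fun v hv => hv⟩
  · obtain ⟨p₁, x, p₂, rfl, hx⟩ := not_nodup_split hnd
    obtain ⟨q₁, q₂, rfl⟩ := List.append_of_mem hx
    -- p = p₁ ++ x :: (q₁ ++ x :: q₂), shorten to p' = p₁ ++ x :: q₂
    set p' : List W := p₁ ++ x :: q₂ with hp'
    have hlen : p'.length ≤ n := by
      have := hn; simp [hp'] at this ⊢; omega
    have hc1 : (p₁ ++ [x]).Chain' R := hc.prefix ⟨q₁ ++ x :: q₂, by simp⟩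
    have hc2 : (x :: q₂).Chain' R := hc.suffix ⟨p₁ ++ x :: q₁, by simp⟩
    have hc' : p'.Chain' R := by
      rw [hp', List.Chain', List.isChain_append]
      refine ⟨hc1.prefix ⟨[x], rfl⟩, hc2, ?_⟩
      intro a ha b hb
      have := (List.isChain_append.1 hc1).2.2
      simp at hb
      subst hb
      exact this a ha x (by simp)
    have hne' : p' ≠ [] := by simp [hp']
    obtain ⟨q, hq1, hq2, hq3, hq4, hq5, hq6⟩ := ih p' hlen hne' hc'
    refine ⟨q, hq1, hq2, hq3, ?_, ?_, ?_⟩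
    · rw [hq4, hp', List.head?_append, List.head?_append]
      simp
    · rw [hq5, hp', List.getLast?_append, List.getLast?_append]
      have h1 : (x :: q₂).getLast? = some ((x :: q₂).getLast (by simp)) :=
        List.getLast?_eq_getLast _
      have h2 : (x :: (q₁ ++ x :: q₂)).getLast? = (x :: q₂).getLast? := by
        rw [show x :: (q₁ ++ x :: q₂) = (x :: q₁) ++ (x :: q₂) by simp,
          List.getLast?_append, h1]
        simp [h1]
      rw [h2]
    · intro v hv
      have := hq6 v hv
      simp [hp'] at this ⊢
      tauto

lemma walk_to_path {R : W → W → Prop} (p : List W) (hne : p ≠ []) (hc : p.Chain' R) :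
    ∃ q : List W, q ≠ [] ∧ q.Nodup ∧ q.Chain' R ∧ q.head? = p.head? ∧
      q.getLast? = p.getLast? ∧ ∀ v ∈ q, v ∈ p :=
  walk_to_path_aux p.length p le_rfl hne hc

lemma head?_append_cons (p₁ : List W) (v : W) (p₂ : List W) :
    (p₁ ++ v :: p₂).head? = (p₁ ++ [v]).head? := by
  rw [List.head?_append, List.head?_append]; simp

lemma getLast?_cons_eq_some (v : W) (p₂ : List W) :
    (v :: p₂).getLast? = some ((v :: p₂).getLast (by simp)) :=
  List.getLast?_eq_getLast _

lemma getLast?_append_singleton (p₁ : List W) (v : W) :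
    (p₁ ++ [v]).getLast? = some v := by
  rw [List.getLast?_append]; simp

lemma head?_append_left {p q : List W} (h : p ≠ []) : (p ++ q).head? = p.head? := by
  cases p with
  | nil => exact absurd rfl h
  | cons a t => simp

lemma getLast?_append_right {p q : List W} (h : q ≠ []) : (p ++ q).getLast? = q.getLast? := by
  cases q with
  | nil => exact absurd rfl h
  | cons a t => exact List.getLast?_append_cons p a t

lemma exists_getLast?_eq {p : List W} (h : p ≠ []) : ∃ v, p.getLast? = some v := by
  cases p with
  | nil => exact absurd rfl h
  | cons a t => exact ⟨_, getLast?_cons_eq_some a t⟩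

lemma chain'_mono_mem {R S : W → W → Prop} :
    ∀ {q : List W}, q.Chain' R →
      (∀ u v, u ∈ q.dropLast → v ∈ q.tail → R u v → S u v) → q.Chain' S := by
  intro q
  induction q with
  | nil => intro _ _; simp [List.Chain']
  | cons a t ih =>
    intro hc H
    cases t with
    | nil => simp [List.Chain']
    | cons b t' =>
      have h1 : R a b := (List.isChain_cons_cons.1 hc).1
      have h2 : (b :: t').Chain' R := (List.isChain_cons_cons.1 hc).2
      refine List.isChain_cons_cons.2 ⟨?_, ?_⟩
      · exact H a b (by simp) (by simp) h1
      · refine ih h2 ?_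
        intro u v hu hv hr
        refine H u v ?_ ?_ hr
        · simp only [List.dropLast_cons₂]
          exact List.mem_cons_of_mem _ hu
        · simp only [List.tail_cons] at hv ⊢
          exact List.mem_cons_of_mem _ hv

lemma chain'_or_split {R : W → W → Prop} (x y : W) :
    ∀ p : List W, p.Chain' R →
      p.Chain' (fun u v => R u v ∧ ¬(u = x ∧ v = y)) ∨ ∃ p₁ p₂, p = p₁ ++ x :: y :: p₂ := by
  intro p
  induction p with
  | nil => intro _; left; simp [List.Chain']
  | cons a t ih =>
    intro hc
    rcases ih (List.isChain_cons.1 hc).2 with h | ⟨p₁, p₂, rfl⟩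
    · cases t with
      | nil => left; simp [List.Chain']
      | cons b t' =>
        by_cases hxy : a = x ∧ b = y
        · exact Or.inr ⟨[], t', by rw [hxy.1, hxy.2]; rfl⟩
        · exact Or.inl (List.isChain_cons_cons.2 ⟨⟨(List.isChain_cons_cons.1 hc).1, hxy⟩, h⟩)
    · exact Or.inr ⟨a :: p₁, p₂, rfl⟩
end Toolkit

section Menger
variable {W : Type*} [Fintype W] [DecidableEq W]

lemma menger_base {R : W → W → Prop} {A B : Set W} {k : ℕ}
    (hE : ∀ x y, R x y → x = y)
    (hk : ∀ X : Set W, IsSeparator R A B X → k ≤ X.ncard) :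
    ∃ P : Finset (List W), P.card = k ∧
      (∀ p ∈ P, IsPathList R p ∧ FirstIn p A ∧ LastIn p B) ∧
      ∀ p ∈ P, ∀ q ∈ P, p ≠ q → ListsDisjoint p q := by
  have hsep : IsSeparator R A B (A ∩ B) := by
    intro p hp hA hB
    obtain ⟨hne, hnd, hc⟩ := hp
    cases p with
    | nil => exact absurd rfl hne
    | cons a t =>
      cases t with
      | nil =>
        obtain ⟨a', ha', hh⟩ := hA
        obtain ⟨b', hb', hl⟩ := hB
        simp at hh hl
        refine ⟨a, by simp, ?_, ?_⟩
        · rwa [hh]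
        · rwa [hl]
      | cons b t' =>
        have h1 : R a b := (List.isChain_cons_cons.1 hc).1
        have := hE a b h1
        subst this
        simp at hnd
  have hAB : k ≤ (A ∩ B).ncard := hk _ hsep
  classical
  set s := (A ∩ B).toFinset with hs
  have hks : k ≤ s.card := by
    rwa [Set.ncard_eq_toFinset_card'] at hAB
  obtain ⟨t, hts, htc⟩ := Finset.exists_subset_card_eq hks
  refine ⟨t.image (fun v => [v]), ?_, ?_, ?_⟩
  · rw [Finset.card_image_of_injective _ (fun a b h => by simpa using h), htc]
  · intro p hp
    simp only [Finset.mem_image] at hp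
    obtain ⟨v, hv, rfl⟩ := hp
    have hvAB : v ∈ A ∩ B := by
      have := hts hv; rwa [hs, Set.mem_toFinset] at this
    exact ⟨⟨by simp, by simp, by simp [List.Chain']⟩, ⟨v, hvAB.1, rfl⟩, ⟨v, hvAB.2, rfl⟩⟩
  · intro p hp q hq hpq
    simp only [Finset.mem_image] at hp hq
    obtain ⟨v, _, rfl⟩ := hp
    obtain ⟨w, _, rfl⟩ := hq
    intro u hu hu'
    simp at hu hu'
    subst hu; subst hu'
    exact hpq rfl
end Menger

section MengerMain
variable {W : Type*} [Fintype W] [DecidableEq W]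

lemma menger_aux :
    ∀ (n : ℕ) (R : W → W → Prop) (A B : Set W) (k : ℕ),
      {e : W × W | R e.1 e.2 ∧ e.1 ≠ e.2}.ncard ≤ n →
      (∀ X : Set W, IsSeparator R A B X → k ≤ X.ncard) →
      ∃ P : Finset (List W), P.card = k ∧
        (∀ p ∈ P, IsPathList R p ∧ FirstIn p A ∧ LastIn p B) ∧
        ∀ p ∈ P, ∀ q ∈ P, p ≠ q → ListsDisjoint p q := by
  intro n
  induction n with
  | zero =>
    intro R A B k hn hk
    refine menger_base ?_ hk
    intro x y hR
    by_contra hne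
    have hmem : (x, y) ∈ {e : W × W | R e.1 e.2 ∧ e.1 ≠ e.2} := ⟨hR, hne⟩
    have h0 : {e : W × W | R e.1 e.2 ∧ e.1 ≠ e.2}.ncard = 0 := le_antisymm hn (Nat.zero_le _)
    rw [Set.ncard_eq_zero (Set.toFinite _)] at h0
    rw [h0] at hmem
    exact hmem
  | succ n ih =>
    intro R A B k hn hk
    by_cases hE : ∃ x y, R x y ∧ x ≠ y
    swap
    · push_neg at hE
      exact menger_base hE hk
    obtain ⟨x, y, hxy, hne⟩ := hE
    set R' : W → W → Prop := fun u v => R u v ∧ ¬(u = x ∧ v = y) with hR'def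
    have hR'R : ∀ a b, R' a b → R a b := fun a b h => h.1
    have hsmall : {e : W × W | R' e.1 e.2 ∧ e.1 ≠ e.2}.ncard ≤ n := by
      have hss : {e : W × W | R' e.1 e.2 ∧ e.1 ≠ e.2} ⊂ {e : W × W | R e.1 e.2 ∧ e.1 ≠ e.2} := by
        constructor
        · intro e he
          exact ⟨he.1.1, he.2⟩
        · intro hsub
          have h1 : (x, y) ∈ {e : W × W | R e.1 e.2 ∧ e.1 ≠ e.2} := ⟨hxy, hne⟩
          exact (hsub h1).1.2 ⟨rfl, rfl⟩
      have := Set.ncard_lt_ncard hss (Set.toFinite _)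
      omega
    by_cases hsepR' : ∀ X : Set W, IsSeparator R' A B X → k ≤ X.ncard
    · obtain ⟨P, h1, h2, h3⟩ := ih R' A B k hsmall hsepR'
      exact ⟨P, h1, fun p hp => ⟨isPathList_mono hR'R (h2 p hp).1, (h2 p hp).2⟩, h3⟩
    push_neg at hsepR'
    obtain ⟨X, hXsep, hXlt⟩ := hsepR'
    have hXxsep : IsSeparator R A B (X ∪ {x}) := by
      intro p hp hA hB
      rcases chain'_or_split x y p hp.2.2 with hc' | ⟨p₁, p₂, rfl⟩
      · obtain ⟨v, hvp, hvX⟩ := hXsep p ⟨hp.1, hp.2.1, hc'⟩ hA hB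
        exact ⟨v, hvp, Or.inl hvX⟩
      · exact ⟨x, by simp, Or.inr rfl⟩
    have hXysep : IsSeparator R A B (X ∪ {y}) := by
      intro p hp hA hB
      rcases chain'_or_split x y p hp.2.2 with hc' | ⟨p₁, p₂, rfl⟩
      · obtain ⟨v, hvp, hvX⟩ := hXsep p ⟨hp.1, hp.2.1, hc'⟩ hA hB
        exact ⟨v, hvp, Or.inl hvX⟩
      · exact ⟨y, by simp, Or.inr rfl⟩
    have hxk : x ∉ X ∧ k = X.ncard + 1 := by
      have h1 : k ≤ (X ∪ {x}).ncard := hk _ hXxsep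
      have h2 : (X ∪ {x}).ncard ≤ X.ncard + 1 := by
        rw [Set.union_singleton]
        exact Set.ncard_insert_le _ _
      constructor
      · intro hx
        rw [Set.union_singleton, Set.insert_eq_self.2 hx] at h1
        omega
      · omega
    obtain ⟨hxX, hkeq⟩ := hxk
    have hyX : y ∉ X := by
      have h1 : k ≤ (X ∪ {y}).ncard := hk _ hXysep
      intro hy
      rw [Set.union_singleton, Set.insert_eq_self.2 hy] at h1
      omega
    -- separator strength transfers
    have hsepA : ∀ Z : Set W, IsSeparator R' A (X ∪ {x}) Z → k ≤ Z.ncard := by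
      intro Z hZ
      refine hk Z ?_
      intro p hp hA hB
      rcases chain'_or_split x y p hp.2.2 with hc' | ⟨p₁, p₂, rfl⟩
      · obtain ⟨v, hvp, hvX⟩ := hXsep p ⟨hp.1, hp.2.1, hc'⟩ hA hB
        obtain ⟨q₁, q₂, rfl⟩ := List.append_of_mem hvp
        have hpre : (q₁ ++ [v]) <+: q₁ ++ v :: q₂ := ⟨q₂, by simp⟩
        have hq : IsPathList R' (q₁ ++ [v]) :=
          ⟨by simp, hp.2.1.sublist hpre.sublist, hc'.prefix hpre⟩
        obtain ⟨a, haA, hh⟩ := hA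
        obtain ⟨u, huq, huZ⟩ := hZ (q₁ ++ [v]) hq
          ⟨a, haA, by rw [head?_append_cons q₁ v q₂] at hh; exact hh⟩
          ⟨v, Or.inl hvX, getLast?_append_singleton q₁ v⟩
        refine ⟨u, ?_, huZ⟩
        simp only [List.mem_append, List.mem_singleton, List.mem_cons] at huq ⊢
        tauto
      · have hpre : (p₁ ++ [x]) <+: p₁ ++ x :: y :: p₂ := ⟨y :: p₂, by simp⟩
        have hchain : (p₁ ++ [x]).Chain' R := hp.2.2.prefix hpre
        have hnd : (p₁ ++ [x]).Nodup := hp.2.1.sublist hpre.sublist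
        have hchain' : (p₁ ++ [x]).Chain' R' := by
          refine chain'_mono_mem hchain ?_
          intro u v hu hv hR
          refine ⟨hR, ?_⟩
          rintro ⟨rfl, rfl⟩
          simp only [List.dropLast_concat] at hu
          have : u ∉ p₁ := (List.disjoint_of_nodup_append hnd).symm (by simp)
          exact this hu
        obtain ⟨a, haA, hh⟩ := hA
        obtain ⟨u, huq, huZ⟩ := hZ (p₁ ++ [x]) ⟨by simp, hnd, hchain'⟩
          ⟨a, haA, by rw [head?_append_cons p₁ x (y :: p₂)] at hh; exact hh⟩
          ⟨x, Or.inr rfl, getLast?_append_singleton p₁ x⟩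
        refine ⟨u, ?_, huZ⟩
        simp only [List.mem_append, List.mem_singleton, List.mem_cons] at huq ⊢
        tauto
    have hsepB : ∀ Z : Set W, IsSeparator R' (X ∪ {y}) B Z → k ≤ Z.ncard := by
      intro Z hZ
      refine hk Z ?_
      intro p hp hA hB
      rcases chain'_or_split x y p hp.2.2 with hc' | ⟨p₁, p₂, rfl⟩
      · obtain ⟨v, hvp, hvX⟩ := hXsep p ⟨hp.1, hp.2.1, hc'⟩ hA hB
        obtain ⟨q₁, q₂, rfl⟩ := List.append_of_mem hvp
        have hsuf : (v :: q₂) <:+ q₁ ++ v :: q₂ := ⟨q₁, rfl⟩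
        have hq : IsPathList R' (v :: q₂) :=
          ⟨by simp, hp.2.1.sublist hsuf.sublist, hc'.suffix hsuf⟩
        obtain ⟨b, hbB, hl⟩ := hB
        obtain ⟨u, huq, huZ⟩ := hZ (v :: q₂) hq
          ⟨v, Or.inl hvX, rfl⟩
          ⟨b, hbB, by rw [List.getLast?_append_cons q₁ v q₂] at hl; exact hl⟩
        refine ⟨u, ?_, huZ⟩
        simp only [List.mem_append, List.mem_cons] at huq ⊢
        tauto
      · have hsuf : (y :: p₂) <:+ p₁ ++ x :: y :: p₂ := ⟨p₁ ++ [x], by simp⟩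
        have hchain : (y :: p₂).Chain' R := hp.2.2.suffix hsuf
        have hnd : (y :: p₂).Nodup := hp.2.1.sublist hsuf.sublist
        have hchain' : (y :: p₂).Chain' R' := by
          refine chain'_mono_mem hchain ?_
          intro u v hu hv hR
          refine ⟨hR, ?_⟩
          rintro ⟨rfl, rfl⟩
          simp only [List.tail_cons] at hv
          exact (List.nodup_cons.1 hnd).1 hv
        obtain ⟨b, hbB, hl⟩ := hB
        obtain ⟨u, huq, huZ⟩ := hZ (y :: p₂) ⟨by simp, hnd, hchain'⟩
          ⟨y, Or.inr rfl, rfl⟩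
          ⟨b, hbB, by
            rw [List.getLast?_append_cons p₁ x (y :: p₂), List.getLast?_cons_cons] at hl
            exact hl⟩
        refine ⟨u, ?_, huZ⟩
        simp only [List.mem_append, List.mem_cons] at huq ⊢
        tauto
    obtain ⟨PP, hPcard, hPprop, hPdisj⟩ := ih R' A (X ∪ {x}) k hsmall hsepA
    obtain ⟨QQ, hQcard, hQprop, hQdisj⟩ := ih R' (X ∪ {y}) B k hsmall hsepB
    classical
    set Xf : Finset W := X.toFinset with hXf
    have hXcard : Xf.card = X.ncard := (Set.ncard_eq_toFinset_card' X).symm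
    have hxXf : x ∉ Xf := by rwa [hXf, Set.mem_toFinset]
    have hyXf : y ∉ Xf := by rwa [hXf, Set.mem_toFinset]
    have hPlastinj : ∀ p ∈ PP, ∀ q ∈ PP, p.getLast? = q.getLast? → p = q := by
      intro p hp q hq h
      by_contra hne'
      obtain ⟨v, hv⟩ := exists_getLast?_eq (hPprop p hp).1.1
      exact hPdisj p hp q hq hne' v (mem_of_getLast?_eq hv)
        (mem_of_getLast?_eq (h ▸ hv))
    have hQheadinj : ∀ p ∈ QQ, ∀ q ∈ QQ, p.head? = q.head? → p = q := by
      intro p hp q hq h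
      by_contra hne'
      obtain ⟨a, haA, hv⟩ := (hQprop p hp).2.1
      exact hQdisj p hp q hq hne' a (mem_of_head?_eq hv) (mem_of_head?_eq (h ▸ hv))
    have hPsurj : ∀ w ∈ insert x Xf, ∃ p ∈ PP, p.getLast? = some w := by
      have hJcard : (PP.image (fun p => p.getLast?)).card = k := by
        rw [Finset.card_image_of_injOn, hPcard]
        intro p hp q hq h
        exact hPlastinj p (by simpa using hp) q (by simpa using hq) h
      have hJsub : PP.image (fun p => p.getLast?) ⊆ (insert x Xf).image some := by
        intro o ho
        simp only [Finset.mem_image] at ho ⊢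
        obtain ⟨p, hp, rfl⟩ := ho
        obtain ⟨a, haX, hl⟩ := (hPprop p hp).2.2
        refine ⟨a, ?_, hl.symm⟩
        rcases haX with h | h
        · exact Finset.mem_insert_of_mem (by rwa [hXf, Set.mem_toFinset])
        · simp at h; simp [h]
      have hcard2 : ((insert x Xf).image some).card = k := by
        rw [Finset.card_image_of_injective _ (Option.some_injective W),
          Finset.card_insert_of_notMem hxXf, hXcard]
        omega
      have hJeq : PP.image (fun p => p.getLast?) = (insert x Xf).image some :=
        Finset.eq_of_subset_of_card_le hJsub (by omega)
      intro w hw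
      have : some w ∈ PP.image (fun p => p.getLast?) := by
        rw [hJeq]; exact Finset.mem_image_of_mem some hw
      simpa using this
    have hQsurj : ∀ w ∈ insert y Xf, ∃ q ∈ QQ, q.head? = some w := by
      have hJcard : (QQ.image (fun p => p.head?)).card = k := by
        rw [Finset.card_image_of_injOn, hQcard]
        intro p hp q hq h
        exact hQheadinj p (by simpa using hp) q (by simpa using hq) h
      have hJsub : QQ.image (fun p => p.head?) ⊆ (insert y Xf).image some := by
        intro o ho
        simp only [Finset.mem_image] at ho ⊢
        obtain ⟨p, hp, rfl⟩ := ho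
        obtain ⟨a, haX, hl⟩ := (hQprop p hp).2.1
        refine ⟨a, ?_, hl.symm⟩
        rcases haX with h | h
        · exact Finset.mem_insert_of_mem (by rwa [hXf, Set.mem_toFinset])
        · simp at h; simp [h]
      have hcard2 : ((insert y Xf).image some).card = k := by
        rw [Finset.card_image_of_injective _ (Option.some_injective W),
          Finset.card_insert_of_notMem hyXf, hXcard]
        omega
      have hJeq : QQ.image (fun p => p.head?) = (insert y Xf).image some :=
        Finset.eq_of_subset_of_card_le hJsub (by omega)
      intro w hw
      have : some w ∈ QQ.image (fun p => p.head?) := by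
        rw [hJeq]; exact Finset.mem_image_of_mem some hw
      simpa using this
    have hPonly : ∀ p ∈ PP, ∀ v ∈ p, v ∈ X ∪ {x} → p.getLast? = some v := by
      intro p hp v hv hvX
      have hvf : v ∈ insert x Xf := by
        rcases hvX with h | h
        · exact Finset.mem_insert_of_mem (by rwa [hXf, Set.mem_toFinset])
        · simp at h; simp [h]
      obtain ⟨q, hq, hql⟩ := hPsurj v hvf
      by_cases hpq : p = q
      · subst hpq; exact hql
      · exact absurd (mem_of_getLast?_eq hql) (hPdisj p hp q hq hpq v hv)
    have hQonly : ∀ q ∈ QQ, ∀ v ∈ q, v ∈ X ∪ {y} → q.head? = some v := by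
      intro p hp v hv hvX
      have hvf : v ∈ insert y Xf := by
        rcases hvX with h | h
        · exact Finset.mem_insert_of_mem (by rwa [hXf, Set.mem_toFinset])
        · simp at h; simp [h]
      obtain ⟨q, hq, hql⟩ := hQsurj v hvf
      by_cases hpq : p = q
      · subst hpq; exact hql
      · exact absurd (mem_of_head?_eq hql) (hQdisj p hp q hq hpq v hv)
    have hcross : ∀ p ∈ PP, ∀ q ∈ QQ, ∀ v, v ∈ p → v ∈ q →
        v ∈ X ∧ p.getLast? = some v ∧ q.head? = some v := by
      intro p hp q hq v hvp hvq
      have hvX : v ∈ X := by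
        by_contra hvX
        obtain ⟨p₁, p₂, hpeq⟩ := List.append_of_mem hvp
        obtain ⟨q₁, q₂, hqeq⟩ := List.append_of_mem hvq
        obtain ⟨hpPath, hpA, hpLast⟩ := hPprop p hp
        obtain ⟨hqPath, hqFirst, hqB⟩ := hQprop q hq
        have hcw : (p₁ ++ v :: q₂).Chain' R' := by
          rw [List.Chain', List.isChain_append]
          refine ⟨(hpeq ▸ hpPath.2.2).prefix ⟨v :: p₂, rfl⟩, (hqeq ▸ hqPath.2.2).suffix ⟨q₁, rfl⟩, ?_⟩
          intro a ha b hb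
          simp only [List.head?_cons, Option.mem_def, Option.some_inj] at hb
          subst hb
          exact (List.isChain_append.1 (hpeq ▸ hpPath.2.2)).2.2 a ha v (by simp)
        have hwavoid : ∀ u ∈ p₁ ++ v :: q₂, u ∉ X := by
          intro u hu hX
          simp only [List.mem_append, List.mem_cons] at hu
          rcases hu with hu | hu | hu
          · have hlast := hPonly p hp u (hpeq ▸ (by simp [hu] : u ∈ p₁ ++ v :: p₂)) (Or.inl hX)
            rw [hpeq, List.getLast?_append_cons] at hlast
            exact (List.disjoint_of_nodup_append (hpeq ▸ hpPath.2.1)) hu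
              (mem_of_getLast?_eq hlast)
          · subst hu; exact hvX hX
          · have hhead := hQonly q hq u (hqeq ▸ (by simp [hu] : u ∈ q₁ ++ v :: q₂)) (Or.inl hX)
            rw [hqeq, head?_append_cons] at hhead
            have hnd2 : ((q₁ ++ [v]) ++ q₂).Nodup := by
              have := hqeq ▸ hqPath.2.1; simpa using this
            exact (List.disjoint_of_nodup_append hnd2) (mem_of_head?_eq hhead) hu
        obtain ⟨r, hr1, hr2, hr3, hr4, hr5, hr6⟩ :=
          walk_to_path (p₁ ++ v :: q₂) (by simp) hcw
        obtain ⟨a, haA, hah⟩ := hpA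
        obtain ⟨b, hbB, hbl⟩ := hqB
        obtain ⟨u', hu'r, hu'X⟩ := hXsep r ⟨hr1, hr2, hr3⟩
          ⟨a, haA, by rw [hr4, head?_append_cons p₁ v q₂, ← head?_append_cons p₁ v p₂, ← hpeq]; exact hah⟩
          ⟨b, hbB, by rw [hr5, List.getLast?_append_cons p₁ v q₂, ← List.getLast?_append_cons q₁ v q₂, ← hqeq]; exact hbl⟩
        exact hwavoid u' (hr6 u' hu'r) hu'X
      exact ⟨hvX, hPonly p hp v hvp (Or.inl hvX), hQonly q hq v hvq (Or.inl hvX)⟩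
    -- the matching
    have hmatch : ∀ p ∈ PP, ∃ q ∈ QQ,
        (p.getLast? = some x ∧ q.head? = some y) ∨
        (∃ w ∈ X, p.getLast? = some w ∧ q.head? = some w) := by
      intro p hp
      obtain ⟨w, hwX, hwl⟩ := (hPprop p hp).2.2
      rcases hwX with hwX | hwx
      · obtain ⟨q, hq, hqh⟩ := hQsurj w
          (Finset.mem_insert_of_mem (by rwa [hXf, Set.mem_toFinset]))
        exact ⟨q, hq, Or.inr ⟨w, hwX, hwl, hqh⟩⟩
      · obtain ⟨q, hq, hqh⟩ := hQsurj y (Finset.mem_insert_self y Xf)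
        simp only [Set.mem_singleton_iff] at hwx
        subst hwx
        exact ⟨q, hq, Or.inl ⟨hwl, hqh⟩⟩
    choose qf hqmem hqspec using hmatch
    set glue : (p : List W) → p ∈ PP → List W :=
      fun p hp => p ++ (if p.getLast? = some x then qf p hp else (qf p hp).tail)
      with hglue_def
    have hglue : ∀ (p : List W) (hp : p ∈ PP),
        IsPathList R (glue p hp) ∧ (glue p hp).head? = p.head? ∧
        (glue p hp).getLast? = (qf p hp).getLast? ∧
        ∀ v ∈ glue p hp, v ∈ p ∨ v ∈ qf p hp := by
      intro p hp
      have hqQQ := hqmem p hp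
      have hsp := hqspec p hp
      have hpPath := (hPprop p hp).1
      have hqPath := (hQprop _ hqQQ).1
      by_cases hcase : p.getLast? = some x
      · have hyhead : (qf p hp).head? = some y := by
          rcases hsp with ⟨_, h⟩ | ⟨w, hwX, hwl, hqh⟩
          · exact h
          · rw [hcase] at hwl
            exact absurd ((Option.some_inj.1 hwl) ▸ hwX) hxX
        have hge : glue p hp = p ++ qf p hp := by
          simp only [hglue_def]; rw [if_pos hcase]
        have hdisj : ∀ v ∈ p, v ∉ qf p hp := by
          intro v hv hvq
          obtain ⟨hvX, hlast, _⟩ := hcross p hp _ hqQQ v hv hvq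
          rw [hcase] at hlast
          exact hxX ((Option.some_inj.1 hlast) ▸ hvX)
        rw [hge]
        refine ⟨⟨by simp [hpPath.1], List.Nodup.append hpPath.2.1 hqPath.2.1 hdisj, ?_⟩,
          head?_append_left hpPath.1, getLast?_append_right hqPath.1, ?_⟩
        · rw [List.Chain', List.isChain_append]
          refine ⟨hpPath.2.2.imp hR'R, hqPath.2.2.imp hR'R, ?_⟩
          intro a ha b hb
          rw [hcase] at ha
          rw [hyhead] at hb
          simp only [Option.mem_def, Option.some_inj] at ha hb
          subst ha; subst hb
          exact hxy
        · intro v hv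
          simp only [List.mem_append] at hv
          tauto
      · have hspec2 : ∃ w ∈ X, p.getLast? = some w ∧ (qf p hp).head? = some w := by
          rcases hsp with ⟨h1, _⟩ | h
          · exact absurd h1 hcase
          · exact h
        obtain ⟨w, hwX, hwl, hqh⟩ := hspec2
        obtain ⟨t, hqt⟩ : ∃ t, qf p hp = w :: t := by
          cases hq : qf p hp with
          | nil => rw [hq] at hqh; simp at hqh
          | cons a t =>
            rw [hq] at hqh
            simp only [List.head?_cons, Option.some_inj] at hqh
            exact ⟨t, by rw [hqh]⟩
        have hge : glue p hp = p ++ t := by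
          simp only [hglue_def]; rw [if_neg hcase, hqt]; simp
        have hdisj : ∀ v ∈ p, v ∉ t := by
          intro v hv hvt
          obtain ⟨hvX, hlast, _⟩ := hcross p hp _ hqQQ v hv (by rw [hqt]; exact List.mem_cons_of_mem _ hvt)
          have hvw : v = w := by
            rw [hwl] at hlast
            exact (Option.some_inj.1 hlast).symm
          subst hvw
          have := hqt ▸ hqPath.2.1
          exact (List.nodup_cons.1 this).1 hvt
        rw [hge]
        have hqchain : (w :: t).Chain' R' := hqt ▸ hqPath.2.2
        refine ⟨⟨by simp [hpPath.1], List.Nodup.append hpPath.2.1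
          ((List.nodup_cons.1 (hqt ▸ hqPath.2.1)).2) hdisj, ?_⟩,
          head?_append_left hpPath.1, ?_, ?_⟩
        · rw [List.Chain', List.isChain_append]
          refine ⟨hpPath.2.2.imp hR'R, (hqchain.tail).imp hR'R, ?_⟩
          intro a ha b hb
          rw [hwl] at ha
          simp only [Option.mem_def, Option.some_inj] at ha
          subst ha
          exact ((List.isChain_cons.1 hqchain).1 b hb).1
        · rw [List.getLast?_append, hqt]
          rw [show w :: t = [w] ++ t by rfl, List.getLast?_append]
          simp [hwl]
        · intro v hv
          simp only [List.mem_append] at hv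
          rcases hv with hv | hv
          · exact Or.inl hv
          · exact Or.inr (by rw [hqt]; exact List.mem_cons_of_mem _ hv)
    -- assemble
    refine ⟨PP.attach.image (fun z => glue z.1 z.2), ?_, ?_, ?_⟩
    · rw [Finset.card_image_of_injOn, Finset.card_attach, hPcard]
      intro z hz z' hz' h
      obtain ⟨a, haA, hah⟩ := (hPprop z.1 z.2).2.1
      have h' : glue z.1 z.2 = glue z'.1 z'.2 := h
      have h1 : (glue z.1 z.2).head? = some a := (hglue z.1 z.2).2.1.trans hah
      have h2 : z'.1.head? = some a := by
        rw [← (hglue z'.1 z'.2).2.1, ← h']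
        exact h1
      exact Subtype.ext (by
        by_contra hne'
        exact hPdisj z.1 z.2 z'.1 z'.2 (fun hh => hne' (hh)) a (mem_of_head?_eq hah)
          (mem_of_head?_eq h2))
    · intro r hr
      simp only [Finset.mem_image, Finset.mem_attach, true_and] at hr
      obtain ⟨z, rfl⟩ := hr
      obtain ⟨hPath, hhead, hlast, _⟩ := hglue z.1 z.2
      obtain ⟨a, haA, hah⟩ := (hPprop z.1 z.2).2.1
      obtain ⟨b, hbB, hbl⟩ := (hQprop _ (hqmem z.1 z.2)).2.2
      exact ⟨hPath, ⟨a, haA, hhead.trans hah⟩, ⟨b, hbB, hlast.trans hbl⟩⟩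
    · intro r hr r' hr' hrr'
      simp only [Finset.mem_image, Finset.mem_attach, true_and] at hr hr'
      obtain ⟨z, rfl⟩ := hr
      obtain ⟨z', rfl⟩ := hr'
      have hpne : z.1 ≠ z'.1 := by
        intro h
        exact hrr' (congrArg (fun z => glue z.1 z.2) (Subtype.ext h))
      intro v hv hv'
      have hm := (hglue z.1 z.2).2.2.2 v hv
      have hm' := (hglue z'.1 z'.2).2.2.2 v hv'
      have hq := hqmem z.1 z.2
      have hq' := hqmem z'.1 z'.2
      rcases hm with hm | hm <;> rcases hm' with hm' | hm'
      · exact hPdisj z.1 z.2 z'.1 z'.2 hpne v hm hm'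
      · -- v ∈ p, v ∈ q'
        obtain ⟨hvX, hlast, hhead⟩ := hcross z.1 z.2 _ hq' v hm hm'
        rcases hqspec z'.1 z'.2 with ⟨_, h⟩ | ⟨w', hw'X, hl', hh'⟩
        · rw [h] at hhead
          exact hyX ((Option.some_inj.1 hhead) ▸ hvX)
        · rw [hh'] at hhead
          have : w' = v := Option.some_inj.1 hhead
          subst this
          exact hpne (hPlastinj z.1 z.2 z'.1 z'.2 (by rw [hlast, hl']))
      · obtain ⟨hvX, hlast, hhead⟩ := hcross z'.1 z'.2 _ hq v hm' hm
        rcases hqspec z.1 z.2 with ⟨_, h⟩ | ⟨w', hw'X, hl', hh'⟩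
        · rw [h] at hhead
          exact hyX ((Option.some_inj.1 hhead) ▸ hvX)
        · rw [hh'] at hhead
          have : w' = v := Option.some_inj.1 hhead
          subst this
          exact hpne (hPlastinj z.1 z.2 z'.1 z'.2 (by rw [hlast, hl']))
      · -- v ∈ q, v ∈ q'
        by_cases hqq : qf z.1 z.2 = qf z'.1 z'.2
        · -- same q: derive z.1 = z'.1
          apply hpne
          rcases hqspec z.1 z.2 with ⟨h1, h2⟩ | ⟨w, hwX, hl, hh⟩ <;>
            rcases hqspec z'.1 z'.2 with ⟨h1', h2'⟩ | ⟨w', hw'X, hl', hh'⟩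
          · exact hPlastinj z.1 z.2 z'.1 z'.2 (by rw [h1, h1'])
          · rw [hqq, hh'] at h2
            exact absurd ((Option.some_inj.1 h2) ▸ hw'X) hyX
          · rw [← hqq, hh] at h2'
            exact absurd ((Option.some_inj.1 h2') ▸ hwX) hyX
          · rw [hqq, hh'] at hh
            have : w = w' := (Option.some_inj.1 hh).symm
            subst this
            exact hPlastinj z.1 z.2 z'.1 z'.2 (by rw [hl, hl'])
        · exact hQdisj _ hq _ hq' hqq v hm hm'
end MengerMain

section Translate
variable {V : Type*} [Fintype V] [DecidableEq V] {ℓ : ℕ}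

/-- Auxiliary digraph for the reduction. -/
def AuxR (G : Fin ℓ → V → V → Prop) (ℬ : Finset (Finset V)) :
    (Fin ℓ × V) ⊕ (V ⊕ Finset V) → (Fin ℓ × V) ⊕ (V ⊕ Finset V) → Prop
  | Sum.inl (i, u), Sum.inl (j, v) => i = j ∧ G i u v
  | Sum.inl (_, u), Sum.inr (Sum.inl w) => u = w
  | Sum.inr (Sum.inl w), Sum.inr (Sum.inr b) => b ∈ ℬ ∧ w ∈ b
  | _, _ => False

def AuxA (S : Fin ℓ → Set V) : Set ((Fin ℓ × V) ⊕ (V ⊕ Finset V)) :=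
  {z | ∃ i u, u ∈ S i ∧ z = Sum.inl (i, u)}

def AuxB (ℬ : Finset (Finset V)) : Set ((Fin ℓ × V) ⊕ (V ⊕ Finset V)) :=
  {z | ∃ b ∈ ℬ, z = Sum.inr (Sum.inr b)}

lemma lift_path {G : Fin ℓ → V → V → Prop} {ℬ : Finset (Finset V)} {S : Fin ℓ → Set V}
    {i : Fin ℓ} {pl : List V} {v : V} {b : Finset V}
    (hpl : IsPathList (G i) pl) (hfirst : FirstIn pl (S i))
    (hlast : pl.getLast? = some v) (hb : b ∈ ℬ) (hvb : v ∈ b) :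
    IsPathList (AuxR G ℬ)
      (pl.map (fun u => Sum.inl (i, u)) ++ [Sum.inr (Sum.inl v), Sum.inr (Sum.inr b)]) ∧
    FirstIn (pl.map (fun u => Sum.inl (i, u)) ++ [Sum.inr (Sum.inl v), Sum.inr (Sum.inr b)])
      (AuxA S) ∧
    LastIn (pl.map (fun u => Sum.inl (i, u)) ++ [Sum.inr (Sum.inl v), Sum.inr (Sum.inr b)])
      (AuxB ℬ) := by
  obtain ⟨hne, hnd, hch⟩ := hpl
  have hmapne : pl.map (fun u => Sum.inl (i, u) : V → (Fin ℓ × V) ⊕ (V ⊕ Finset V)) ≠ [] := by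
    simpa using hne
  refine ⟨⟨by simp, ?_, ?_⟩, ?_, ?_⟩
  · -- nodup
    refine List.Nodup.append ?_ (by simp) ?_
    · exact hnd.map (fun a b h => by simpa using h)
    · intro z hz hz'
      simp only [List.mem_map] at hz
      obtain ⟨u, _, rfl⟩ := hz
      simp at hz'
  · -- chain
    rw [List.Chain', List.isChain_append]
    refine ⟨?_, ?_, ?_⟩
    · rw [List.isChain_map]
      exact hch.imp (fun a b h => ⟨rfl, h⟩)
    · exact List.isChain_pair.2 ⟨hb, hvb⟩
    · intro z hz w hw
      simp only [List.head?_cons, Option.mem_def, Option.some_inj] at hw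
      subst hw
      rw [List.getLast?_map, hlast] at hz
      simp only [Option.mem_def, Option.map_some, Option.some_inj] at hz
      subst hz
      exact rfl
  · -- FirstIn
    obtain ⟨a, haS, hah⟩ := hfirst
    refine ⟨Sum.inl (i, a), ⟨i, a, haS, rfl⟩, ?_⟩
    rw [head?_append_left hmapne, List.head?_map, hah]
    rfl
  · -- LastIn
    exact ⟨Sum.inr (Sum.inr b), ⟨b, hb, rfl⟩, by
      rw [getLast?_append_right (by simp)]; simp⟩

lemma aux_parse {G : Fin ℓ → V → V → Prop} {ℬ : Finset (Finset V)} :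
    ∀ (p : List ((Fin ℓ × V) ⊕ (V ⊕ Finset V))), p.Chain' (AuxR G ℬ) →
      ∀ i u, p.head? = some (Sum.inl (i, u)) →
      (∃ b' ∈ ℬ, p.getLast? = some (Sum.inr (Sum.inr b'))) →
      ∃ (pl : List V) (v : V) (b : Finset V),
        p = pl.map (fun w => Sum.inl (i, w)) ++ [Sum.inr (Sum.inl v), Sum.inr (Sum.inr b)] ∧
        pl ≠ [] ∧ pl.Chain' (G i) ∧ pl.head? = some u ∧ pl.getLast? = some v ∧
        b ∈ ℬ ∧ v ∈ b := by
  intro p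
  induction p with
  | nil => intro _ i u h; simp at h
  | cons a t ih =>
    intro hch i u hh hlst
    simp only [List.head?_cons, Option.some_inj] at hh
    subst hh
    cases t with
    | nil =>
      obtain ⟨b', _, hb'⟩ := hlst
      simp at hb'
    | cons c t' =>
      have h1 : AuxR G ℬ (Sum.inl (i, u)) c := (List.isChain_cons_cons.1 hch).1
      have h2 : (c :: t').Chain' (AuxR G ℬ) := (List.isChain_cons_cons.1 hch).2
      have hlst' : ∃ b' ∈ ℬ, (c :: t').getLast? = some (Sum.inr (Sum.inr b')) := by
        obtain ⟨b', hb'1, hb'2⟩ := hlst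
        rw [List.getLast?_cons_cons] at hb'2
        exact ⟨b', hb'1, hb'2⟩
      match c with
      | Sum.inl (j, w) =>
        obtain ⟨hij, hG⟩ : i = j ∧ G i u w := h1
        subst hij
        obtain ⟨pl, v, b, heq, hne, hchain, hhead, hlast, hb, hvb⟩ :=
          ih h2 i w (by simp) hlst'
        refine ⟨u :: pl, v, b, by rw [List.map_cons, List.cons_append, heq],
          by simp, ?_, by simp, ?_, hb, hvb⟩
        · refine List.isChain_cons.2 ⟨?_, hchain⟩
          intro w' hw'
          rw [hhead] at hw'
          simp only [Option.mem_def, Option.some_inj] at hw'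
          subst hw'
          exact hG
        · rw [show u :: pl = [u] ++ pl by rfl, getLast?_append_right hne]
          exact hlast
      | Sum.inr (Sum.inl w) =>
        have huw : u = w := h1
        subst huw
        match t' with
        | [] =>
          obtain ⟨b', _, hb'⟩ := hlst'
          simp at hb'
        | d :: t'' =>
          have h3 : AuxR G ℬ (Sum.inr (Sum.inl u)) d := (List.isChain_cons_cons.1 h2).1
          match d with
          | Sum.inl _ => exact absurd h3 (by intro h; exact h)
          | Sum.inr (Sum.inl _) => exact absurd h3 (by intro h; exact h)
          | Sum.inr (Sum.inr b) =>
            obtain ⟨hbℬ, hub⟩ : b ∈ ℬ ∧ u ∈ b := h3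
            match t'' with
            | [] =>
              exact ⟨[u], u, b, by simp, by simp, by simp [List.Chain'], by simp, by simp, hbℬ, hub⟩
            | e :: t''' =>
              have h4 : AuxR G ℬ (Sum.inr (Sum.inr b)) e :=
                (List.isChain_cons_cons.1 (List.isChain_cons_cons.1 h2).2).1
              exact absurd h4 (by intro h; exact h)
      | Sum.inr (Sum.inr b) => exact absurd h1 (by intro h; exact h)
end Translate

section Wrappers
variable {W : Type*} [Fintype W] [DecidableEq W]

lemma menger (R : W → W → Prop) (A B : Set W) (k : ℕ)
    (hk : ∀ X : Set W, IsSeparator R A B X → k ≤ X.ncard) :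
    ∃ P : Finset (List W), P.card = k ∧
      (∀ p ∈ P, IsPathList R p ∧ FirstIn p A ∧ LastIn p B) ∧
      ∀ p ∈ P, ∀ q ∈ P, p ≠ q → ListsDisjoint p q :=
  menger_aux _ R A B k le_rfl hk

lemma paths_le_sep {R : W → W → Prop} {A B : Set W} {P : Finset (List W)}
    (hP : ∀ p ∈ P, IsPathList R p ∧ FirstIn p A ∧ LastIn p B)
    (hd : ∀ p ∈ P, ∀ q ∈ P, p ≠ q → ListsDisjoint p q)
    {X : Set W} (hX : IsSeparator R A B X) : P.card ≤ X.ncard := by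
  classical
  have hch : ∀ z : {p // p ∈ P}, ∃ v, v ∈ z.1 ∧ v ∈ X := by
    intro z
    obtain ⟨h1, h2, h3⟩ := hP z.1 z.2
    obtain ⟨v, hv, hvX⟩ := hX z.1 h1 h2 h3
    exact ⟨v, hv, hvX⟩
  choose f hf1 hf2 using hch
  have hle : P.attach.card ≤ X.toFinset.card := by
    apply Finset.card_le_card_of_injOn f
    · intro z _
      rw [Finset.mem_coe, Set.mem_toFinset]
      exact hf2 z
    · intro z _ z' _ h
      by_contra hne
      have hne' : z.1 ≠ z'.1 := fun hh => hne (Subtype.ext hh)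
      exact hd z.1 z.2 z'.1 z'.2 hne' (f z) (hf1 z) (h ▸ hf1 z')
  rw [Finset.card_attach] at hle
  rwa [Set.ncard_eq_toFinset_card']
end Wrappers

section Translate2
variable {V : Type*} [Fintype V] [DecidableEq V] {ℓ : ℕ}
  {G : Fin ℓ → V → V → Prop} {S : Fin ℓ → Set V} {ℬ : Finset (Finset V)}

lemma tsys_to_aux {P : Finset (Fin ℓ × List V)} (hP : TPathSys G S ℬ P) :
    ∃ P' : Finset (List ((Fin ℓ × V) ⊕ (V ⊕ Finset V))), P'.card = P.card ∧
      (∀ p ∈ P', IsPathList (AuxR G ℬ) p ∧ FirstIn p (AuxA S) ∧ LastIn p (AuxB ℬ)) ∧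
      ∀ p ∈ P', ∀ q ∈ P', p ≠ q → ListsDisjoint p q := by
  classical
  obtain ⟨⟨hpaths, hdisj⟩, hlasts, φ, hφinj, hφ⟩ := hP
  choose lastv hlastv hlastmem using fun z : {q // q ∈ P} => (hφ z.1 z.2).2
  set L : {q // q ∈ P} → List ((Fin ℓ × V) ⊕ (V ⊕ Finset V)) :=
    fun z => z.1.2.map (fun u => Sum.inl (z.1.1, u)) ++
      [Sum.inr (Sum.inl (lastv z)), Sum.inr (Sum.inr (φ z.1))] with hL
  have hLP : ∀ z, IsPathList (AuxR G ℬ) (L z) ∧ FirstIn (L z) (AuxA S) ∧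
      LastIn (L z) (AuxB ℬ) := by
    intro z
    exact lift_path (hpaths z.1 z.2).1 (hpaths z.1 z.2).2 (hlastv z) (hφ z.1 z.2).1
      (hlastmem z)
  have hmem : ∀ z w, w ∈ L z →
      (∃ u ∈ z.1.2, w = Sum.inl (z.1.1, u)) ∨ w = Sum.inr (Sum.inl (lastv z)) ∨
        w = Sum.inr (Sum.inr (φ z.1)) := by
    intro z w hw
    simp only [hL, List.mem_append, List.mem_map, List.mem_cons, List.mem_singleton,
      List.not_mem_nil, or_false] at hw
    rcases hw with ⟨u, hu, rfl⟩ | h | h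
    · exact Or.inl ⟨u, hu, rfl⟩
    · exact Or.inr (Or.inl h)
    · exact Or.inr (Or.inr h)
  have hLlast : ∀ z, (L z).getLast? = some (Sum.inr (Sum.inr (φ z.1))) := by
    intro z
    rw [hL]
    rw [getLast?_append_right (by simp)]
    simp
  have hLinj : ∀ z z', L z = L z' → z = z' := by
    intro z z' h
    have h2 : some (Sum.inr (Sum.inr (φ z.1)) : (Fin ℓ × V) ⊕ (V ⊕ Finset V)) =
        some (Sum.inr (Sum.inr (φ z'.1))) := by
      rw [← hLlast z, ← hLlast z', h]
    simp only [Option.some_inj, Sum.inr.injEq] at h2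
    exact Subtype.ext (hφinj (by simpa using z.2) (by simpa using z'.2) h2)
  refine ⟨P.attach.image L, ?_, ?_, ?_⟩
  · rw [Finset.card_image_of_injOn fun z _ z' _ h => hLinj z z' h, Finset.card_attach]
  · intro p hp
    simp only [Finset.mem_image, Finset.mem_attach, true_and] at hp
    obtain ⟨z, rfl⟩ := hp
    exact hLP z
  · intro p hp q hq hne
    simp only [Finset.mem_image, Finset.mem_attach, true_and] at hp hq
    obtain ⟨z, rfl⟩ := hp
    obtain ⟨z', rfl⟩ := hq
    have hzz : z ≠ z' := fun h => hne (by rw [h])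
    have hqq : z.1 ≠ z'.1 := fun h => hzz (Subtype.ext h)
    intro w hw hw'
    rcases hmem z w hw with ⟨u, hu, rfl⟩ | rfl | rfl <;>
      rcases hmem z' _ hw' with ⟨u', hu', he⟩ | he | he
    · simp only [Sum.inl.injEq, Prod.mk.injEq] at he
      obtain ⟨hi, hu2⟩ := he
      subst hu2
      exact hdisj z.1 z.2 z'.1 z'.2 hqq hi u hu hu'
    · simp at he
    · simp at he
    · simp at he
    · simp only [Sum.inr.injEq, Sum.inl.injEq] at he
      refine hlasts z.1 z.2 z'.1 z'.2 hqq ?_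
      rw [hlastv z, hlastv z', he]
    · simp at he
    · simp at he
    · simp at he
    · simp only [Sum.inr.injEq] at he
      exact hzz (Subtype.ext (hφinj (by simp) (by simp) he))
end Translate2

section Translate3
variable {V : Type*} [Fintype V] [DecidableEq V] {ℓ : ℕ}
  {G : Fin ℓ → V → V → Prop} {S : Fin ℓ → Set V} {ℬ : Finset (Finset V)}

lemma aux_to_tsys {P' : Finset (List ((Fin ℓ × V) ⊕ (V ⊕ Finset V)))}
    (hP' : ∀ p ∈ P', IsPathList (AuxR G ℬ) p ∧ FirstIn p (AuxA S) ∧ LastIn p (AuxB ℬ))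
    (hd : ∀ p ∈ P', ∀ q ∈ P', p ≠ q → ListsDisjoint p q) :
    ∃ P : Finset (Fin ℓ × List V), TPathSys G S ℬ P ∧ P.card = P'.card := by
  classical
  have hparse : ∀ z : {p // p ∈ P'}, ∃ (i : Fin ℓ) (pl : List V) (v : V) (b : Finset V),
      z.1 = pl.map (fun w => Sum.inl (i, w)) ++ [Sum.inr (Sum.inl v), Sum.inr (Sum.inr b)] ∧
      pl ≠ [] ∧ pl.Chain' (G i) ∧ FirstIn pl (S i) ∧ pl.getLast? = some v ∧
      b ∈ ℬ ∧ v ∈ b := by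
    intro z
    obtain ⟨⟨hne, hnd, hch⟩, hA, hB⟩ := hP' z.1 z.2
    obtain ⟨a, haA, hah⟩ := hA
    obtain ⟨i, u, huS, rfl⟩ := haA
    obtain ⟨bb, hbB, hbl⟩ := hB
    obtain ⟨b', hb'ℬ, rfl⟩ := hbB
    obtain ⟨pl, v, b, heq, hplne, hchain, hhead, hlast, hb, hvb⟩ :=
      aux_parse z.1 hch i u hah ⟨b', hb'ℬ, hbl⟩
    exact ⟨i, pl, v, b, heq, hplne, hchain, ⟨u, huS, hhead⟩, hlast, hb, hvb⟩
  choose pi pl pv pb heq hplne hchain hfirst hlast hbB hvb using hparse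
  have hplnd : ∀ z, (pl z).Nodup := by
    intro z
    have hnd := (hP' z.1 z.2).1.2.1
    rw [heq z] at hnd
    have h1 : ((pl z).map (fun w => (Sum.inl (pi z, w) : (Fin ℓ × V) ⊕ (V ⊕ Finset V)))).Nodup :=
      (List.nodup_append.1 hnd).1
    exact h1.of_map
  have hmemlift : ∀ z (w : V), w ∈ pl z → Sum.inl (pi z, w) ∈ z.1 := by
    intro z w hw
    rw [heq z]
    simp only [List.mem_append, List.mem_map]
    exact Or.inl ⟨w, hw, rfl⟩
  have hmemv : ∀ z, (Sum.inr (Sum.inl (pv z)) : (Fin ℓ × V) ⊕ (V ⊕ Finset V)) ∈ z.1 := by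
    intro z
    rw [heq z]
    simp
  have hmemb : ∀ z, (Sum.inr (Sum.inr (pb z)) : (Fin ℓ × V) ⊕ (V ⊕ Finset V)) ∈ z.1 := by
    intro z
    rw [heq z]
    simp
  set F : {p // p ∈ P'} → Fin ℓ × List V := fun z => (pi z, pl z) with hF
  have hzne : ∀ z z' : {p // p ∈ P'}, z ≠ z' → z.1 ≠ z'.1 :=
    fun z z' h hh => h (Subtype.ext hh)
  have hFinj : ∀ z z' : {p // p ∈ P'}, F z = F z' → z = z' := by
    intro z z' h
    by_contra hne'
    simp only [hF, Prod.mk.injEq] at h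
    obtain ⟨u, hu⟩ := List.exists_mem_of_ne_nil (pl z) (hplne z)
    have h1 : Sum.inl (pi z, u) ∈ z.1 := hmemlift z u hu
    have h2 : Sum.inl (pi z, u) ∈ z'.1 := by
      rw [h.1]
      exact hmemlift z' u (h.2 ▸ hu)
    exact hd z.1 z.2 z'.1 z'.2 (hzne z z' hne') _ h1 h2
  set φ : Fin ℓ × List V → Finset V :=
    fun q => if h : ∃ z : {p // p ∈ P'}, F z = q then pb h.choose else ∅ with hφdef
  have hφval : ∀ z : {p // p ∈ P'}, φ (F z) = pb z := by
    intro z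
    have hex : ∃ z' : {p // p ∈ P'}, F z' = F z := ⟨z, rfl⟩
    have : hex.choose = z := hFinj _ _ hex.choose_spec
    simp only [hφdef, dif_pos hex, this]
  refine ⟨P'.attach.image F, ⟨⟨?_, ?_⟩, ?_, φ, ?_, ?_⟩, ?_⟩
  · intro q hq
    simp only [Finset.mem_image, Finset.mem_attach, true_and] at hq
    obtain ⟨z, rfl⟩ := hq
    exact ⟨⟨hplne z, hplnd z, hchain z⟩, hfirst z⟩
  · intro q hq q' hq' hne hidx
    simp only [Finset.mem_image, Finset.mem_attach, true_and] at hq hq'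
    obtain ⟨z, rfl⟩ := hq
    obtain ⟨z', rfl⟩ := hq'
    intro w hw hw'
    have h1 := hmemlift z w hw
    have h2 := hmemlift z' w hw'
    have hidx' : pi z = pi z' := hidx
    rw [← hidx'] at h2
    have hzz : z ≠ z' := fun h => hne (by rw [h])
    exact hd z.1 z.2 z'.1 z'.2 (hzne z z' hzz) _ h1 h2
  · intro q hq q' hq' hne hl
    simp only [Finset.mem_image, Finset.mem_attach, true_and] at hq hq'
    obtain ⟨z, rfl⟩ := hq
    obtain ⟨z', rfl⟩ := hq'
    have hzz : z ≠ z' := fun h => hne (by rw [h])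
    simp only [hF] at hl
    rw [hlast z, hlast z'] at hl
    simp only [Option.some_inj] at hl
    have h1 := hmemv z
    have h2 := hmemv z'
    rw [← hl] at h2
    exact hd z.1 z.2 z'.1 z'.2 (hzne z z' hzz) _ h1 h2
  · intro q hq q' hq' hphi
    simp only [Finset.coe_image, Set.mem_image, Finset.mem_coe, Finset.mem_attach] at hq hq'
    obtain ⟨z, _, rfl⟩ := hq
    obtain ⟨z', _, rfl⟩ := hq'
    rw [hφval z, hφval z'] at hphi
    have h1 := hmemb z
    have h2 := hmemb z'
    rw [← hphi] at h2
    by_cases hzz : z = z'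
    · rw [hzz]
    · exact absurd h2 (hd z.1 z.2 z'.1 z'.2 (hzne z z' hzz) _ h1)
  · intro q hq
    simp only [Finset.mem_image, Finset.mem_attach, true_and] at hq
    obtain ⟨z, rfl⟩ := hq
    rw [hφval z]
    exact ⟨hbB z, pv z, hlast z, hvb z⟩
  · rw [Finset.card_image_of_injOn fun z _ z' _ h => hFinj z z' h, Finset.card_attach]
end Translate3

section Translate4
variable {V : Type*} [Fintype V] [DecidableEq V] {ℓ : ℕ}
  {G : Fin ℓ → V → V → Prop} {S : Fin ℓ → Set V} {ℬ : Finset (Finset V)}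

lemma tcut_to_sep {ℬ' : Finset (Finset V)} (hsub : ℬ' ⊆ ℬ) {X₀ : Set V}
    (hX₀ : X₀ ⊆ ↑(ℬ'.biUnion id)) {X : Fin ℓ → Set V}
    (hX : ∀ i, IsSeparator (G i) (S i) ((↑(ℬ'.biUnion id) : Set V) \ X₀) (X i)) :
    ∃ Y : Set ((Fin ℓ × V) ⊕ (V ⊕ Finset V)),
      IsSeparator (AuxR G ℬ) (AuxA S) (AuxB ℬ) Y ∧
      Y.ncard ≤ (ℬ \ ℬ').card + X₀.ncard + ∑ i : Fin ℓ, (X i).ncard := by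
  classical
  set Yf : Finset ((Fin ℓ × V) ⊕ (V ⊕ Finset V)) :=
    ((ℬ \ ℬ').image fun b => Sum.inr (Sum.inr b)) ∪
    (X₀.toFinset.image fun v => Sum.inr (Sum.inl v)) ∪
    Finset.univ.biUnion (fun i : Fin ℓ => (X i).toFinset.image (fun v => Sum.inl (i, v)))
    with hYf
  refine ⟨↑Yf, ?_, ?_⟩
  · intro p hp hA hB
    obtain ⟨a, haA, hah⟩ := hA
    obtain ⟨i, u, huS, rfl⟩ := haA
    obtain ⟨bb, hbB, hbl⟩ := hB
    obtain ⟨b', hb'ℬ, rfl⟩ := hbB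
    obtain ⟨pl, v, b, hpeq, hplne, hchain, hhead, hlast, hb, hvb⟩ :=
      aux_parse p hp.2.2 i u hah ⟨b', hb'ℬ, hbl⟩
    by_cases hbmem : b ∈ ℬ'
    · by_cases hvX₀ : v ∈ X₀
      · refine ⟨Sum.inr (Sum.inl v), by rw [hpeq]; simp, ?_⟩
        simp only [hYf, Finset.coe_union, Set.mem_union, Finset.mem_coe, Finset.mem_union]
        left; right
        simp only [Finset.mem_image, Set.mem_toFinset]
        exact ⟨v, hvX₀, rfl⟩
      · have hvB : v ∈ (↑(ℬ'.biUnion id) : Set V) \ X₀ := by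
          refine ⟨?_, hvX₀⟩
          simp only [Finset.coe_biUnion, Set.mem_iUnion, Finset.mem_coe, id]
          exact ⟨b, hbmem, hvb⟩
        have hplnd : pl.Nodup := by
          have hnd := hp.2.1
          rw [hpeq] at hnd
          exact ((List.nodup_append.1 hnd).1).of_map
        obtain ⟨w, hwpl, hwX⟩ := hX i pl ⟨hplne, hplnd, hchain⟩
          ⟨u, huS, hhead⟩ ⟨v, hvB, hlast⟩
        have hwmem : Sum.inl (i, w) ∈ p := by
          rw [hpeq]
          simp only [List.mem_append, List.mem_map]
          exact Or.inl ⟨w, hwpl, rfl⟩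
        refine ⟨Sum.inl (i, w), hwmem, ?_⟩
        simp only [hYf, Finset.coe_union, Set.mem_union, Finset.mem_coe]
        right
        simp only [Finset.mem_biUnion, Finset.mem_univ, true_and]
        exact ⟨i, Finset.mem_image.2 ⟨w, Set.mem_toFinset.2 hwX, rfl⟩⟩
    · refine ⟨Sum.inr (Sum.inr b), by rw [hpeq]; simp, ?_⟩
      simp only [hYf, Finset.coe_union, Set.mem_union, Finset.mem_coe]
      left; left
      exact Finset.mem_image.2 ⟨b, Finset.mem_sdiff.2 ⟨hb, hbmem⟩, rfl⟩
  · rw [Set.ncard_coe_finset]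
    calc Yf.card ≤ (((ℬ \ ℬ').image fun b => (Sum.inr (Sum.inr b) :
          (Fin ℓ × V) ⊕ (V ⊕ Finset V))) ∪
          (X₀.toFinset.image fun v => Sum.inr (Sum.inl v))).card +
          (Finset.univ.biUnion (fun i : Fin ℓ =>
            (X i).toFinset.image (fun v => Sum.inl (i, v)))).card := Finset.card_union_le _ _
      _ ≤ (((ℬ \ ℬ').image fun b => (Sum.inr (Sum.inr b) :
          (Fin ℓ × V) ⊕ (V ⊕ Finset V))).card +
          (X₀.toFinset.image fun v => Sum.inr (Sum.inl v)).card) +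
          (Finset.univ.biUnion (fun i : Fin ℓ =>
            (X i).toFinset.image (fun v => Sum.inl (i, v)))).card := by
        exact Nat.add_le_add_right (Finset.card_union_le _ _) _
      _ ≤ ((ℬ \ ℬ').card + X₀.ncard) + ∑ i : Fin ℓ, (X i).ncard := by
        refine Nat.add_le_add ?_ ?_
        · refine Nat.add_le_add ?_ ?_
          · exact Finset.card_image_le
          · calc (X₀.toFinset.image fun v =>
                (Sum.inr (Sum.inl v) : (Fin ℓ × V) ⊕ (V ⊕ Finset V))).card
                ≤ X₀.toFinset.card := Finset.card_image_le
              _ = X₀.ncard := (Set.ncard_eq_toFinset_card' X₀).symm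
        · calc (Finset.univ.biUnion (fun i : Fin ℓ =>
              (X i).toFinset.image (fun v => (Sum.inl (i, v) :
                (Fin ℓ × V) ⊕ (V ⊕ Finset V))))).card
              ≤ ∑ i : Fin ℓ, ((X i).toFinset.image (fun v => (Sum.inl (i, v) :
                (Fin ℓ × V) ⊕ (V ⊕ Finset V)))).card := Finset.card_biUnion_le
            _ ≤ ∑ i : Fin ℓ, (X i).ncard := by
              refine Finset.sum_le_sum ?_
              intro i _
              calc ((X i).toFinset.image (fun v => (Sum.inl (i, v) :
                  (Fin ℓ × V) ⊕ (V ⊕ Finset V)))).card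
                  ≤ (X i).toFinset.card := Finset.card_image_le
                _ = (X i).ncard := (Set.ncard_eq_toFinset_card' _).symm
end Translate4

section Translate5
variable {V : Type*} [Fintype V] [DecidableEq V] {ℓ : ℕ}
  {G : Fin ℓ → V → V → Prop} {S : Fin ℓ → Set V} {ℬ : Finset (Finset V)}

lemma sep_to_tcut {Y : Set ((Fin ℓ × V) ⊕ (V ⊕ Finset V))}
    (hY : IsSeparator (AuxR G ℬ) (AuxA S) (AuxB ℬ) Y) :
    ∃ ℬ' ⊆ ℬ, ∃ X₀ : Set V, X₀ ⊆ ↑(ℬ'.biUnion id) ∧ ∃ X : Fin ℓ → Set V,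
      (∀ i, IsSeparator (G i) (S i) ((↑(ℬ'.biUnion id) : Set V) \ X₀) (X i)) ∧
      (ℬ \ ℬ').card + X₀.ncard + ∑ i : Fin ℓ, (X i).ncard ≤ Y.ncard := by
  classical
  set ℬ' : Finset (Finset V) := ℬ.filter (fun b => Sum.inr (Sum.inr b) ∉ Y) with hℬ'
  set X₀ : Set V := {v | Sum.inr (Sum.inl v) ∈ Y} ∩ ↑(ℬ'.biUnion id) with hX₀
  set X : Fin ℓ → Set V := fun i => {v | Sum.inl (i, v) ∈ Y} with hXdef
  refine ⟨ℬ', Finset.filter_subset _ _, X₀, Set.inter_subset_right, X, ?_, ?_⟩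
  · intro i p hp hA hB
    obtain ⟨v, hvB, hvl⟩ := hB
    obtain ⟨hv1, hv2⟩ := hvB
    simp only [Finset.coe_biUnion, Set.mem_iUnion, Finset.mem_coe, id] at hv1
    obtain ⟨b, hbℬ', hvb⟩ := hv1
    have hbℬ : b ∈ ℬ := (Finset.mem_filter.1 hbℬ').1
    have hbY : Sum.inr (Sum.inr b) ∉ Y := (Finset.mem_filter.1 hbℬ').2
    obtain ⟨hlift, hliftA, hliftB⟩ := lift_path (S := S) hp hA hvl hbℬ hvb
    obtain ⟨w, hwp, hwY⟩ := hY _ hlift hliftA hliftB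
    simp only [List.mem_append, List.mem_map, List.mem_cons, List.mem_singleton,
      List.not_mem_nil, or_false] at hwp
    rcases hwp with ⟨u, hu, rfl⟩ | rfl | rfl
    · exact ⟨u, hu, hwY⟩
    · exfalso
      apply hv2
      rw [hX₀]
      refine ⟨hwY, ?_⟩
      simp only [Finset.coe_biUnion, Set.mem_iUnion, Finset.mem_coe, id]
      exact ⟨b, hbℬ', hvb⟩
    · exact absurd hwY hbY
  · -- counting
    set Yf : Finset ((Fin ℓ × V) ⊕ (V ⊕ Finset V)) := Y.toFinset with hYfdef
    have hYcard : Y.ncard = Yf.card := Set.ncard_eq_toFinset_card' Y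
    set F1 : Finset ((Fin ℓ × V) ⊕ (V ⊕ Finset V)) :=
      (ℬ \ ℬ').image (fun b => Sum.inr (Sum.inr b)) with hF1
    set F2 : Finset ((Fin ℓ × V) ⊕ (V ⊕ Finset V)) :=
      X₀.toFinset.image (fun v => Sum.inr (Sum.inl v)) with hF2
    set F3 : Finset ((Fin ℓ × V) ⊕ (V ⊕ Finset V)) :=
      Finset.univ.biUnion (fun i : Fin ℓ => (X i).toFinset.image (fun v => Sum.inl (i, v)))
      with hF3
    have hsub : F1 ∪ F2 ∪ F3 ⊆ Yf := by
      intro w hw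
      simp only [Finset.mem_union] at hw
      rw [hYfdef, Set.mem_toFinset]
      rcases hw with (hw | hw) | hw
      · simp only [hF1, Finset.mem_image] at hw
        obtain ⟨b, hb, rfl⟩ := hw
        have hb2 := Finset.mem_sdiff.1 hb
        have := hb2.2
        rw [hℬ', Finset.mem_filter] at this
        push_neg at this
        exact this hb2.1
      · simp only [hF2, Finset.mem_image, Set.mem_toFinset] at hw
        obtain ⟨v, hv, rfl⟩ := hw
        exact hv.1
      · simp only [hF3, Finset.mem_biUnion, Finset.mem_univ, true_and,
          Finset.mem_image, Set.mem_toFinset] at hw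
        obtain ⟨i, v, hv, rfl⟩ := hw
        exact hv
    have hd12 : Disjoint F1 F2 := by
      rw [Finset.disjoint_left]
      intro w hw1 hw2
      simp only [hF1, Finset.mem_image] at hw1
      simp only [hF2, Finset.mem_image] at hw2
      obtain ⟨b, _, rfl⟩ := hw1
      obtain ⟨v, _, hv⟩ := hw2
      simp at hv
    have hd123 : Disjoint (F1 ∪ F2) F3 := by
      rw [Finset.disjoint_left]
      intro w hw1 hw2
      simp only [hF3, Finset.mem_biUnion, Finset.mem_univ, true_and,
        Finset.mem_image] at hw2
      obtain ⟨i, v, _, rfl⟩ := hw2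
      simp only [Finset.mem_union, hF1, hF2, Finset.mem_image] at hw1
      rcases hw1 with ⟨b, _, hb⟩ | ⟨v', _, hv'⟩
      · simp at hb
      · simp at hv'
    have hcard : (F1 ∪ F2 ∪ F3).card = F1.card + F2.card + F3.card := by
      rw [Finset.card_union_of_disjoint hd123, Finset.card_union_of_disjoint hd12]
    have hF1card : F1.card = (ℬ \ ℬ').card :=
      Finset.card_image_of_injective _ (fun a b h => by simpa using h)
    have hF2card : F2.card = X₀.ncard := by
      rw [hF2, Finset.card_image_of_injective _ (fun a b h => by simpa using h)]
      exact (Set.ncard_eq_toFinset_card' X₀).symm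
    have hF3card : F3.card = ∑ i : Fin ℓ, (X i).ncard := by
      rw [hF3, Finset.card_biUnion]
      · refine Finset.sum_congr rfl ?_
        intro i _
        rw [Finset.card_image_of_injective _ (fun a b h => by simpa using h)]
        exact (Set.ncard_eq_toFinset_card' _).symm
      · intro i _ j _ hij
        rw [Function.onFun, Finset.disjoint_left]
        intro w hw1 hw2
        simp only [Finset.mem_image] at hw1 hw2
        obtain ⟨v, _, rfl⟩ := hw1
        obtain ⟨v', _, hv'⟩ := hw2
        simp only [Sum.inl.injEq, Prod.mk.injEq] at hv'
        exact hij hv'.1.symm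
    have := Finset.card_le_card hsub
    rw [hcard, hF1card, hF2card, hF3card] at this
    omega
end Translate5

/-- Min-max duality for T-paths and T-cuts: the maximum size of a set of
T-paths w.r.t. `(ℱ,𝒮)` and `ℬ` equals the minimum order of a T-cut, i.e. the
minimum over `ℬ' ⊆ ℬ` of `|ℬ \ ℬ'|` plus the minimum order of a D-cut
w.r.t. `(ℱ,𝒮)` and `⋃ℬ'`. -/
theorem tpaths_min_max {V : Type*} [Fintype V] [DecidableEq V] {ℓ : ℕ}
    (G : Fin ℓ → V → V → Prop) (S : Fin ℓ → Set V) (ℬ : Finset (Finset V)) :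
    sSup {n : ℕ | ∃ P : Finset (Fin ℓ × List V), TPathSys G S ℬ P ∧ P.card = n} =
    sInf {n : ℕ | ∃ ℬ' ⊆ ℬ, ∃ X₀ : Set V, X₀ ⊆ ↑(ℬ'.biUnion id) ∧
      ∃ X : Fin ℓ → Set V,
        (∀ i, IsSeparator (G i) (S i) ((↑(ℬ'.biUnion id) : Set V) \ X₀) (X i)) ∧
        n = (ℬ \ ℬ').card + X₀.ncard + ∑ i : Fin ℓ, (X i).ncard} := by
  classical
  set M := {n : ℕ | ∃ P : Finset (Fin ℓ × List V), TPathSys G S ℬ P ∧ P.card = n} with hM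
  set N := {n : ℕ | ∃ ℬ' ⊆ ℬ, ∃ X₀ : Set V, X₀ ⊆ ↑(ℬ'.biUnion id) ∧
      ∃ X : Fin ℓ → Set V,
        (∀ i, IsSeparator (G i) (S i) ((↑(ℬ'.biUnion id) : Set V) \ X₀) (X i)) ∧
        n = (ℬ \ ℬ').card + X₀.ncard + ∑ i : Fin ℓ, (X i).ncard} with hN
  have hM0 : 0 ∈ M := ⟨∅, ⟨⟨by simp, by simp⟩, by simp, fun _ => ∅, by simp, by simp⟩,
    by simp⟩
  have hMb : ∀ m ∈ M, m ≤ ℬ.card := by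
    rintro m ⟨P, ⟨_, _, φ, hinj, hφ⟩, rfl⟩
    calc P.card = (P.image φ).card := (Finset.card_image_of_injOn hinj).symm
      _ ≤ ℬ.card := Finset.card_le_card (by
        intro b hb
        obtain ⟨q, hq, rfl⟩ := Finset.mem_image.1 hb
        exact (hφ q hq).1)
  have hMne : M.Nonempty := ⟨0, hM0⟩
  have hMbdd : BddAbove M := ⟨ℬ.card, fun m hm => hMb m hm⟩
  have hNB : ℬ.card ∈ N := by
    refine ⟨∅, by simp, ∅, by simp, fun _ => ∅, ?_, by simp⟩
    intro i p hp hA hB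
    obtain ⟨a, ha, _⟩ := hB
    simp at ha
  have hNne : N.Nonempty := ⟨_, hNB⟩
  have hMN : ∀ m ∈ M, ∀ n ∈ N, m ≤ n := by
    rintro m ⟨P, hP, rfl⟩ n ⟨ℬ', hsub, X₀, hX₀, Xx, hXsep, rfl⟩
    obtain ⟨P', hcard, hprops, hd⟩ := tsys_to_aux hP
    obtain ⟨Y, hYsep, hYcard⟩ := tcut_to_sep hsub hX₀ hXsep
    calc P.card = P'.card := hcard.symm
      _ ≤ Y.ncard := paths_le_sep hprops hd hYsep
      _ ≤ _ := hYcard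
  set k := sSup M with hk
  have hkM : k ∈ M := Nat.sSup_mem hMne hMbdd
  have hnosep : ∃ Y, IsSeparator (AuxR G ℬ) (AuxA S) (AuxB ℬ) Y ∧ Y.ncard ≤ k := by
    by_contra h
    push_neg at h
    obtain ⟨P', hc, hpr, hdj⟩ := menger (AuxR G ℬ) (AuxA S) (AuxB ℬ) (k + 1)
      (fun Y hY => h Y hY)
    obtain ⟨P, hTP, hPc⟩ := aux_to_tsys hpr hdj
    have hmem : k + 1 ∈ M := ⟨P, hTP, by rw [hPc, hc]⟩
    have := le_csSup hMbdd hmem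
    omega
  obtain ⟨Y, hYsep, hYle⟩ := hnosep
  obtain ⟨ℬ', hs, X₀, h0, Xx, hXs, horder⟩ := sep_to_tcut hYsep
  have hNel : (ℬ \ ℬ').card + X₀.ncard + ∑ i : Fin ℓ, (Xx i).ncard ∈ N :=
    ⟨ℬ', hs, X₀, h0, Xx, hXs, rfl⟩
  apply _root_.le_antisymm
  · exact csSup_le hMne (fun m hm => le_csInf hNne (fun n hn => hMN m hm n hn))
  · exact (csInf_le (OrderBot.bddBelow N) hNel).trans (horder.trans hYle)
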